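/- For an integral domain D, the following are equivalent: (1) D is a field; (2) the Anderson ring D[X]_A is a principal ideal domain; (3) D[X]_A is a valuation domain; (4) D[X]_A is a Bézout domain (every finitely generated ideal is principal). -/

import Mathlib

open Polynomial

/-- The multiplicative set `A = {f ∈ R[X] : f(0) = 1}` of polynomials
with constant term `1`. -/
def andersonSubmonoid (R : Type*) [CommRing R] : Submonoid (Polynomial R) where
  carrier := {f | f.coeff 0 = 1}
  one_mem' := by simp
  mul_mem' := by
    intro a b ha hb
    simp only [Set.mem_setOf_eq, Polynomial.mul_coeff_zero] at *
    rw [ha, hb, mul_one]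

/-- The Anderson ring `R[X]_A`, the localization of `R[X]` at `A`. -/
abbrev AndersonRing (R : Type*) [CommRing R] := Localization (andersonSubmonoid R)

/-- The canonical ring homomorphism `R → R[X]_A`. -/
noncomputable def andersonMap (R : Type*) [CommRing R] : R →+* AndersonRing R :=
  (algebraMap (Polynomial R) (AndersonRing R)).comp Polynomial.C

section Aux

variable (D : Type*) [CommRing D] [IsDomain D]

lemma anderson_le_nzd : andersonSubmonoid D ≤ nonZeroDivisors (Polynomial D) := by
  intro f hf
  have h1 : f.coeff 0 = 1 := hf
  refine mem_nonZeroDivisors_of_ne_zero ?_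
  rintro rfl
  simp at h1

instance anderson_isDomain : IsDomain (AndersonRing D) :=
  IsLocalization.isDomain_localization (anderson_le_nzd D)

/-- Evaluation at 0 extended to the Anderson ring. -/
noncomputable def andersonEv : AndersonRing D →+* D :=
  IsLocalization.lift (M := andersonSubmonoid D) (S := AndersonRing D)
    (g := constantCoeff)
    (fun s => by
      have h1 : (s : Polynomial D).coeff 0 = 1 := s.2
      show IsUnit ((s : Polynomial D).coeff 0)
      rw [h1]; exact isUnit_one)

lemma andersonEv_algebraMap (f : Polynomial D) :
    andersonEv D (algebraMap (Polynomial D) (AndersonRing D) f) = f.coeff 0 :=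
  IsLocalization.lift_eq _ f

lemma anderson_algebraMap_injective :
    Function.Injective (algebraMap (Polynomial D) (AndersonRing D)) :=
  IsLocalization.injective _ (anderson_le_nzd D)

lemma anderson_mem_span_X {r : AndersonRing D} (hr : andersonEv D r = 0) :
    r ∈ Ideal.span {algebraMap (Polynomial D) (AndersonRing D) X} := by
  obtain ⟨⟨f, s⟩, h⟩ := IsLocalization.surj (andersonSubmonoid D) r
  have hs : IsUnit (algebraMap (Polynomial D) (AndersonRing D) s) :=
    IsLocalization.map_units _ s
  have hev : andersonEv D (algebraMap (Polynomial D) (AndersonRing D) f) = 0 := by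
    rw [← h, map_mul, hr, zero_mul]
  rw [andersonEv_algebraMap] at hev
  obtain ⟨g, hg⟩ := X_dvd_iff.mpr hev
  obtain ⟨u, hu⟩ := hs
  have : r = algebraMap (Polynomial D) (AndersonRing D) X *
      (algebraMap (Polynomial D) (AndersonRing D) g * ↑u⁻¹) := by
    have h' : r * ↑u = algebraMap (Polynomial D) (AndersonRing D) f := by rw [hu]; exact h
    calc r = r * ↑u * ↑u⁻¹ := by rw [mul_assoc, u.mul_inv, mul_one]
    _ = algebraMap (Polynomial D) (AndersonRing D) (X * g) * ↑u⁻¹ := by rw [h', hg]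
    _ = _ := by rw [map_mul, mul_assoc]
  rw [this]
  exact Ideal.mul_mem_right _ _ (Ideal.subset_span rfl)

lemma anderson_X_ne_zero :
    algebraMap (Polynomial D) (AndersonRing D) X ≠ 0 := by
  intro h
  exact X_ne_zero ((map_eq_zero_iff _ (anderson_algebraMap_injective D)).mp h)

lemma isField_of_bezout (hB : IsBezout (AndersonRing D)) : IsField D := by
  refine ⟨⟨0, 1, zero_ne_one⟩, mul_comm, ?_⟩
  intro d hd
  set R := AndersonRing D
  set φ := algebraMap (Polynomial D) R
  set d' := φ (C d) with hd'
  set X' := φ X with hX'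
  have hP : (Ideal.span ({d', X'} : Set R)).IsPrincipal :=
    IsBezout.isPrincipal_of_FG _
      (Submodule.fg_span ((Set.finite_singleton X').insert d'))
  obtain ⟨g, hg⟩ := hP
  rw [Ideal.submodule_span_eq] at hg
  have hdmem : d' ∈ Ideal.span ({g} : Set R) := by
    rw [← hg]; exact Ideal.subset_span (by simp)
  have hXmem : X' ∈ Ideal.span ({g} : Set R) := by
    rw [← hg]; exact Ideal.subset_span (by simp)
  obtain ⟨u, hu⟩ := Ideal.mem_span_singleton'.mp hdmem
  obtain ⟨v, hv⟩ := Ideal.mem_span_singleton'.mp hXmem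
  have hevd : andersonEv D d' = d := by
    rw [hd', andersonEv_algebraMap]; simp
  have hevX : andersonEv D X' = 0 := by
    rw [hX', andersonEv_algebraMap]; simp
  have hgne : andersonEv D g ≠ 0 := by
    intro h0
    apply hd
    rw [← hevd, ← hu, map_mul, h0, mul_zero]
  have hevv : andersonEv D v = 0 := by
    have := congrArg (andersonEv D) hv
    rw [map_mul, hevX] at this
    rcases mul_eq_zero.mp this with h | h
    · exact h
    · exact absurd h hgne
  obtain ⟨w, hw⟩ := Ideal.mem_span_singleton'.mp (anderson_mem_span_X D hevv)
  have hXeq : X' * (w * g) = X' * 1 := by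
    rw [mul_one]
    calc X' * (w * g) = (w * X') * g := by ring
    _ = v * g := by rw [hw]
    _ = X' := hv
  have hwg : w * g = 1 := mul_left_cancel₀ (anderson_X_ne_zero D) hXeq
  have hgu : IsUnit g := IsUnit.of_mul_eq_one (a := g) w (by rw [mul_comm]; exact hwg)
  have htop : Ideal.span ({d', X'} : Set R) = ⊤ := by
    rw [hg, Ideal.span_singleton_eq_top]; exact hgu
  have h1 : (1 : R) ∈ Ideal.span ({d', X'} : Set R) := htop ▸ Submodule.mem_top
  obtain ⟨a, b, hab⟩ := Ideal.mem_span_pair.mp h1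
  refine ⟨andersonEv D a, ?_⟩
  have := congrArg (andersonEv D) hab
  rw [map_add, map_mul, map_mul, hevd, hevX, mul_zero, add_zero, map_one] at this
  rw [mul_comm]; exact this

end Aux

section FieldCase

variable (K : Type*) [Field K]

lemma anderson_unit_mul_X_pow (r : AndersonRing K) :
    r = 0 ∨ ∃ (u : (AndersonRing K)ˣ) (n : ℕ),
      r = ↑u * (algebraMap (Polynomial K) (AndersonRing K) X) ^ n := by
  obtain ⟨⟨f, s⟩, h⟩ := IsLocalization.surj (andersonSubmonoid K) r
  obtain ⟨us, hus⟩ := IsLocalization.map_units (AndersonRing K) s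
  have h' : r * ↑us = algebraMap (Polynomial K) (AndersonRing K) f := by rw [hus]; exact h
  by_cases hf : f = 0
  · left
    have h0 : r * ↑us = 0 := by rw [h', hf, map_zero]
    calc r = r * ↑us * ↑us⁻¹ := by rw [mul_assoc, us.mul_inv, mul_one]
    _ = 0 := by rw [h0, zero_mul]
  · right
    obtain ⟨q, hq, hndvd⟩ := f.exists_eq_pow_rootMultiplicity_mul_and_not_dvd hf 0
    rw [map_zero, sub_zero] at hq hndvd
    have hq0 : q.coeff 0 ≠ 0 := fun h0 => hndvd (X_dvd_iff.mpr h0)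
    have hmem : C (q.coeff 0)⁻¹ * q ∈ andersonSubmonoid K := by
      show (C (q.coeff 0)⁻¹ * q).coeff 0 = 1
      rw [mul_coeff_zero, coeff_C_zero, inv_mul_cancel₀ hq0]
    have hqeq : q = C (q.coeff 0) * (C (q.coeff 0)⁻¹ * q) := by
      rw [← mul_assoc, ← C_mul, mul_inv_cancel₀ hq0, C_1, one_mul]
    have hqunit : IsUnit (algebraMap (Polynomial K) (AndersonRing K) q) := by
      rw [hqeq, map_mul]
      exact ((RingHom.isUnit_map _ (isUnit_C.mpr (isUnit_iff_ne_zero.mpr hq0))).mul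
        (IsLocalization.map_units (AndersonRing K) ⟨_, hmem⟩))
    obtain ⟨uq, huq⟩ := hqunit
    refine ⟨uq * us⁻¹, f.rootMultiplicity 0, ?_⟩
    have h'' : r * ↑us =
        (algebraMap (Polynomial K) (AndersonRing K) X) ^ f.rootMultiplicity 0 * ↑uq := by
      rw [h', huq]
      conv_lhs => rw [hq]
      rw [map_mul, map_pow]
    calc r = r * ↑us * ↑us⁻¹ := by rw [mul_assoc, us.mul_inv, mul_one]
    _ = _ := by rw [h'', Units.val_mul]; ring

instance anderson_preValuationRing : PreValuationRing (AndersonRing K) := by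
  refine ⟨fun a b => ?_⟩
  rcases anderson_unit_mul_X_pow K a with rfl | ⟨u, n, rfl⟩
  · exact ⟨0, Or.inr (by simp)⟩
  rcases anderson_unit_mul_X_pow K b with rfl | ⟨v, m, rfl⟩
  · exact ⟨0, Or.inl (by simp)⟩
  set X' := algebraMap (Polynomial K) (AndersonRing K) X
  rcases le_total n m with hnm | hmn
  · refine ⟨↑u⁻¹ * ↑v * X' ^ (m - n), Or.inl ?_⟩
    have hpow : X' ^ n * X' ^ (m - n) = X' ^ m := by
      rw [← pow_add, Nat.add_sub_cancel' hnm]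
    calc ↑u * X' ^ n * (↑u⁻¹ * ↑v * X' ^ (m - n))
        = (↑u * ↑u⁻¹) * ↑v * (X' ^ n * X' ^ (m - n)) := by ring
    _ = ↑v * X' ^ m := by rw [hpow, u.mul_inv, one_mul]
  · refine ⟨↑v⁻¹ * ↑u * X' ^ (n - m), Or.inr ?_⟩
    have hpow : X' ^ m * X' ^ (n - m) = X' ^ n := by
      rw [← pow_add, Nat.add_sub_cancel' hmn]
    calc ↑v * X' ^ m * (↑v⁻¹ * ↑u * X' ^ (n - m))
        = (↑v * ↑v⁻¹) * ↑u * (X' ^ m * X' ^ (n - m)) := by ring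
    _ = ↑u * X' ^ n := by rw [hpow, v.mul_inv, one_mul]

instance anderson_valuationRing : ValuationRing (AndersonRing K) := ⟨⟩

instance anderson_noetherian : IsNoetherianRing (AndersonRing K) :=
  IsLocalization.isNoetherianRing (andersonSubmonoid K) (AndersonRing K) inferInstance

end FieldCase

/-- For an integral domain `D`, the following are equivalent: `D` is a field;
`D[X]_A` is a PID; `D[X]_A` is a valuation domain; `D[X]_A` is a Bézout
domain. -/
theorem anderson_field_tfae (D : Type*) [CommRing D] [IsDomain D] :
    (IsField D ↔
      (∃ _ : IsDomain (AndersonRing D), IsPrincipalIdealRing (AndersonRing D))) ∧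
    (IsField D ↔
      (∃ h : IsDomain (AndersonRing D), @ValuationRing (AndersonRing D) _ h)) ∧
    (IsField D ↔
      (∃ _ : IsDomain (AndersonRing D), IsBezout (AndersonRing D))) := by
  have main : IsField D → IsPrincipalIdealRing (AndersonRing D) ∧
      ValuationRing (AndersonRing D) ∧ IsBezout (AndersonRing D) := by
    intro hF
    letI := hF.toField
    exact ⟨inferInstance, inferInstance, inferInstance⟩
  refine ⟨⟨fun hF => ⟨inferInstance, (main hF).1⟩, ?_⟩,
    ⟨fun hF => ⟨inferInstance, (main hF).2.1⟩, ?_⟩,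
    ⟨fun hF => ⟨inferInstance, (main hF).2.2⟩, ?_⟩⟩
  · rintro ⟨_, hP⟩
    exact isField_of_bezout D (@IsBezout.of_isPrincipalIdealRing _ _ hP)
  · rintro ⟨h, hv⟩
    haveI : ValuationRing (AndersonRing D) := hv
    exact isField_of_bezout D inferInstance
  · rintro ⟨_, hB⟩
    exact isField_of_bezout D hB
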